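/- Let $\Sigma \subset \mathbb{R}^n$ and suppose at two consecutive dyadic scales we have slab inclusions: $\Sigma \cap (B_{2t} \setminus \overline{B_t}) \subset \{|e_1 \cdot x - b_1| \leq h_1\} \cap \{|e_2 \cdot x - b_2| \leq h_2\}$ with $e_1, e_2 \in \mathbb{S}^{n-1}$, $b_1, b_2 \in \mathbb{R}$, $h_1, h_2 > 0$. Suppose moreover $\Sigma \cap (B_{2t} \setminus \overline{B_t})$ contains, for some $y' \in \mathbb{R}^{n-1}$ with $t < |y'| < 2t$ written in coordinates adapted to $e_1 = e_n$, the graph points $(y, f(y))$ for all $y \in B'_{t/100}(y')$, for some function $f$ with values in $[b_1 - h_1, b_1 + h_1]$. If additionally $|e_2 - e_1| \leq 1/2$, then $t|e_2 - e_1| + |b_2 - b_1| \leq C(h_1 + h_2)$ for a dimensional constant $C = C(n)$. -/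

import Mathlib

open scoped RealInnerProductSpace

/-- Embedding of a graph point `(y, s) ∈ ℝ^m × ℝ` into `ℝ^{m+1}`. -/
noncomputable def embed {m : ℕ} (y : EuclideanSpace ℝ (Fin m)) (s : ℝ) :
    EuclideanSpace ℝ (Fin (m + 1)) :=
  (WithLp.equiv 2 (∀ _ : Fin (m + 1), ℝ)).symm
    (fun i => if h : (i : ℕ) < m then y ⟨i, h⟩ else s)

lemma embed_castSucc {m : ℕ} (y : EuclideanSpace ℝ (Fin m)) (s : ℝ) (i : Fin m) :
    embed y s i.castSucc = y i := by
  simp only [embed, WithLp.equiv_symm_apply, PiLp.toLp_apply]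
  rw [dif_pos (by simpa using i.isLt)]
  rfl

lemma embed_last {m : ℕ} (y : EuclideanSpace ℝ (Fin m)) (s : ℝ) :
    embed y s (Fin.last m) = s := by
  simp only [embed, WithLp.equiv_symm_apply, PiLp.toLp_apply]
  rw [dif_neg (by simp)]

lemma inner_embed_embed {m : ℕ} (y z : EuclideanSpace ℝ (Fin m)) (s r : ℝ) :
    ⟪embed y s, embed z r⟫ = ⟪y, z⟫ + s * r := by
  simp only [PiLp.inner_apply, RCLike.inner_apply, conj_trivial, Fin.sum_univ_castSucc,
    embed_castSucc, embed_last]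
  ring

lemma embed_proj {m : ℕ} (x : EuclideanSpace ℝ (Fin (m+1))) :
    embed ((WithLp.equiv 2 (∀ _ : Fin m, ℝ)).symm (fun i => x i.castSucc)) (x (Fin.last m)) = x := by
  ext i
  cases i using Fin.lastCases with | last => ?_ | cast j => ?_
  · exact embed_last _ _
  · rw [embed_castSucc]; rfl

lemma single_eq_embed {m : ℕ} :
    (EuclideanSpace.single (Fin.last m) (1:ℝ)) = embed 0 1 := by
  ext i
  cases i using Fin.lastCases with | last => ?_ | cast j => ?_
  · rw [embed_last]; simp
  · rw [embed_castSucc]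
    simp [EuclideanSpace.single_apply, (Fin.castSucc_lt_last j).ne]

lemma embed_sub {m : ℕ} (y z : EuclideanSpace ℝ (Fin m)) (s r : ℝ) :
    embed y s - embed z r = embed (y - z) (s - r) := by
  ext i
  cases i using Fin.lastCases with | last => ?_ | cast j => ?_
  · simp [embed_last]
  · simp [embed_castSucc]

lemma norm_embed_sq {m : ℕ} (y : EuclideanSpace ℝ (Fin m)) (s : ℝ) :
    ‖embed y s‖ ^ 2 = ‖y‖ ^ 2 + s ^ 2 := by
  rw [← real_inner_self_eq_norm_sq, ← real_inner_self_eq_norm_sq, inner_embed_embed]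
  ring

lemma abs_le_norm_embed {m : ℕ} (y : EuclideanSpace ℝ (Fin m)) (s : ℝ) :
    |s| ≤ ‖embed y s‖ := by
  have h := norm_embed_sq y s
  nlinarith [norm_nonneg (embed y s), norm_nonneg y, abs_nonneg s, sq_abs s]


set_option maxHeartbeats 1600000 in
/-- Coefficient comparison (Step 2 of the proof of Theorem 2.2): if a set `Σ ⊆ ℝ^{m+1}`
(`m + 1 = n`) lies, on the annulus `B_{2t} \ B̄_t`, in two slabs of thicknesses `h₁, h₂`
with directions `e₁ = e_n`, `e₂` and offsets `b₁, b₂`, and contains a graphical patch of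
radius `t/100` over a base point `y'` with `t < |y'| < 2t` with values in
`[b₁ - h₁, b₁ + h₁]`, and `|e₂ - e₁| ≤ 1/2`, then
`t|e₂ - e₁| + |b₂ - b₁| ≤ C(h₁ + h₂)` with `C = C(n)`. -/
theorem stmt17 (m : ℕ) (hm : 1 ≤ m) :
    ∃ C > 0, ∀ (S : Set (EuclideanSpace ℝ (Fin (m + 1))))
      (e₂ : EuclideanSpace ℝ (Fin (m + 1))) (b₁ b₂ h₁ h₂ t : ℝ),
      0 < t → 0 < h₁ → 0 < h₂ → ‖e₂‖ = 1 →
      ‖e₂ - EuclideanSpace.single (Fin.last m) (1:ℝ)‖ ≤ 1/2 →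
      (∀ x ∈ S ∩ (Metric.ball 0 (2*t) \ Metric.closedBall 0 t),
        |⟪EuclideanSpace.single (Fin.last m) (1:ℝ), x⟫ - b₁| ≤ h₁ ∧ |⟪e₂, x⟫ - b₂| ≤ h₂) →
      (∃ (y' : EuclideanSpace ℝ (Fin m)) (f : EuclideanSpace ℝ (Fin m) → ℝ),
        t < ‖y'‖ ∧ ‖y'‖ < 2*t ∧
        ∀ y ∈ Metric.ball y' (t/100),
          embed y (f y) ∈ S ∩ (Metric.ball 0 (2*t) \ Metric.closedBall 0 t) ∧
          |f y - b₁| ≤ h₁) →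
      t * ‖e₂ - EuclideanSpace.single (Fin.last m) (1:ℝ)‖ + |b₂ - b₁| ≤ C * (h₁ + h₂) := by
  refine ⟨5000, by norm_num, ?_⟩
  intro S e₂ b₁ b₂ h₁ h₂ t ht hh₁ hh₂ he₂ hclose hslab hgraph
  obtain ⟨y', f, hy1, hy2, hgr⟩ := hgraph
  set w : EuclideanSpace ℝ (Fin m) :=
    (WithLp.equiv 2 (∀ _ : Fin m, ℝ)).symm (fun i => e₂ i.castSucc) with hw
  set a : ℝ := e₂ (Fin.last m) with ha
  have he₂eq : e₂ = embed w a := (embed_proj e₂).symm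
  have hsub : e₂ - EuclideanSpace.single (Fin.last m) (1:ℝ) = embed w (a - 1) := by
    rw [he₂eq, single_eq_embed, embed_sub, sub_zero]
  -- norm identities
  have hid1 : ‖e₂ - EuclideanSpace.single (Fin.last m) (1:ℝ)‖ ^ 2 = ‖w‖ ^ 2 + (a - 1) ^ 2 := by
    rw [hsub, norm_embed_sq]
  have hid2 : ‖w‖ ^ 2 + a ^ 2 = 1 := by
    rw [← norm_embed_sq, ← he₂eq, he₂]; norm_num
  -- key facts at graph points
  have key : ∀ y ∈ Metric.ball y' (t/100),
      |f y - b₁| ≤ h₁ ∧ |⟪w, y⟫ + a * f y - b₂| ≤ h₂ ∧ |f y| ≤ 2 * t := by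
    intro y hy
    obtain ⟨hmem, hfb⟩ := hgr y hy
    obtain ⟨_, h2⟩ := hslab _ hmem
    have hin : ⟪e₂, embed y (f y)⟫ = ⟪w, y⟫ + a * f y := by
      rw [he₂eq, inner_embed_embed]
    have hnorm : ‖embed y (f y)‖ < 2 * t := by
      have := hmem.2.1
      simpa [Metric.mem_ball, dist_zero_right] using this
    exact ⟨hfb, by rwa [hin] at h2,
      (abs_le_norm_embed y (f y)).trans hnorm.le⟩
  have hyball : y' ∈ Metric.ball y' (t/100) :=
    Metric.mem_ball_self (by linarith)
  -- bounds on a and w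
  have hne : ‖e₂ - EuclideanSpace.single (Fin.last m) (1:ℝ)‖ ≥ 0 := norm_nonneg _
  have ha1 : |a - 1| ≤ 1/2 := by
    nlinarith [sq_abs (a - 1), abs_nonneg (a - 1), sq_nonneg (‖w‖)]
  have ha_half : 1/2 ≤ a := by
    rcases abs_le.mp ha1 with ⟨h, _⟩; linarith
  have ha_le1 : a ≤ 1 := by nlinarith [sq_nonneg ‖w‖]
  have hwle1 : ‖w‖ ≤ 1 := by nlinarith [norm_nonneg w]
  have ha1w : |a - 1| ≤ ‖w‖ ^ 2 := by
    rw [abs_sub_comm, abs_of_nonneg (by linarith)]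
    nlinarith
  -- main quantitative bound on ‖w‖
  have hwbound : t * ‖w‖ ≤ 200 * (3 * h₁ + 2 * h₂) := by
    rcases eq_or_ne w 0 with h0 | h0
    · rw [h0, norm_zero]; nlinarith
    · have hwpos : 0 < ‖w‖ := norm_pos_iff.mpr h0
      set v : EuclideanSpace ℝ (Fin m) := (t / (200 * ‖w‖)) • w with hv
      have hnv : ‖v‖ = t / 200 := by
        rw [hv, norm_smul, Real.norm_eq_abs, abs_of_pos (by positivity)]
        field_simp
      have hinv : ⟪w, v⟫ = (t / 200) * ‖w‖ := by
        rw [hv, real_inner_smul_right, real_inner_self_eq_norm_sq]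
        field_simp
      have hy₁ : y' + v ∈ Metric.ball y' (t/100) := by
        rw [Metric.mem_ball, dist_eq_norm, add_sub_cancel_left, hnv]
        linarith
      obtain ⟨hb1, hb2, _⟩ := key _ hy₁
      obtain ⟨hb1', hb2', _⟩ := key y' hyball
      have hsplit : ⟪w, y' + v⟫ = ⟪w, y'⟫ + (t / 200) * ‖w‖ := by
        rw [inner_add_right, hinv]
      rw [hsplit] at hb2
      rcases abs_le.mp hb1 with ⟨p1, p2⟩
      rcases abs_le.mp hb2 with ⟨p3, p4⟩
      rcases abs_le.mp hb1' with ⟨p5, p6⟩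
      rcases abs_le.mp hb2' with ⟨p7, p8⟩
      nlinarith [mul_le_mul_of_nonneg_left (show f (y' + v) - f y' ≤ 2 * h₁ by linarith)
          (show (0:ℝ) ≤ a by linarith),
        mul_le_mul_of_nonneg_left (show -(2 * h₁) ≤ f (y' + v) - f y' by linarith)
          (show (0:ℝ) ≤ a by linarith)]
  -- conclude
  have hee : ‖e₂ - EuclideanSpace.single (Fin.last m) (1:ℝ)‖ ≤ 2 * ‖w‖ := by
    nlinarith [norm_nonneg w, sq_abs (a-1), abs_nonneg (a-1)]
  obtain ⟨hb1', hb2', hf'⟩ := key y' hyball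
  have hcs : |⟪w, y'⟫| ≤ ‖w‖ * (2 * t) :=
    (abs_real_inner_le_norm w y').trans
      (mul_le_mul_of_nonneg_left hy2.le (norm_nonneg w))
  have haf : |(a - 1) * f y'| ≤ ‖w‖ ^ 2 * (2 * t) := by
    rw [abs_mul]
    exact mul_le_mul ha1w hf' (abs_nonneg _) (sq_nonneg _)
  have hB : |b₂ - b₁| ≤ h₂ + ‖w‖ * (2 * t) + ‖w‖ ^ 2 * (2 * t) + h₁ := by
    rcases abs_le.mp hb1' with ⟨p1, p2⟩
    rcases abs_le.mp hb2' with ⟨p3, p4⟩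
    rcases abs_le.mp hcs with ⟨p5, p6⟩
    rcases abs_le.mp haf with ⟨p7, p8⟩
    rw [abs_le]
    constructor <;> nlinarith
  have hT : t * ‖e₂ - EuclideanSpace.single (Fin.last m) (1:ℝ)‖ ≤ 2 * (t * ‖w‖) := by
    nlinarith
  nlinarith [norm_nonneg w, mul_le_mul_of_nonneg_right hwle1 (norm_nonneg w)]
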